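/- Suppose for each $n$ (with $b=b(n)\to\infty$), the residuals $\hat{r}_1^{(n)},\ldots,\hat{r}_n^{(n)}$ sum to zero, $\frac{1}{n}X_n'X_n \to V$ positive definite, $\frac{1}{n}X_n'J_n'J_nX_n \to Q$ positive definite, and $\frac{\hat{\sigma}_n^2}{n}\to 0$ where $\hat{\sigma}_n^2 = \frac{1}{n}\sum \hat{r}_i^2$ is bounded. Then the SRB estimator $\hat{\beta}^*_{(b)}$ converges in probability (conditionally on the data) to $\hat{\beta}$, i.e., for every $\delta>0$, $P(\|\hat{\beta}^*_{(b)}-\hat{\beta}\|>\delta)\to 0$ as $n\to\infty$. -/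

import Mathlib

open MeasureTheory ProbabilityTheory Matrix Filter
open scoped ENNReal NNReal Topology



lemma srb_integrable_dirac {α : Type*} [MeasurableSpace α] [MeasurableSingletonClass α]
    {g : α → ℝ} (hg : Measurable g) (a : α) : Integrable g (Measure.dirac a) := by
  refine ⟨hg.aestronglyMeasurable, ?_⟩
  simp [HasFiniteIntegral, lintegral_dirac]

lemma srb_moment_of_law {Ω : Type*} [MeasurableSpace Ω] {P : Measure Ω}
    {N : ℕ} {e : Ω → ℝ} (he : Measurable e) {c : ℝ≥0∞} (hc : c ≠ ⊤) {v : Fin N → ℝ}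
    (hlaw : Measure.map e P = c • ∑ j : Fin N, Measure.dirac (v j))
    (g : ℝ → ℝ) (hg : Measurable g) :
    Integrable (fun ω => g (e ω)) P ∧ ∫ ω, g (e ω) ∂P = c.toReal * ∑ j, g (v j) := by
  have hint : Integrable g (c • ∑ j : Fin N, Measure.dirac (v j)) :=
    (integrable_finset_sum_measure.2 fun j _ => srb_integrable_dirac hg (v j)).smul_measure hc
  have hint' : Integrable (fun ω => g (e ω)) P := by
    have h1 : AEStronglyMeasurable g (Measure.map e P) := by
      rw [hlaw]; exact hg.aestronglyMeasurable
    exact (integrable_map_measure h1 he.aemeasurable).1 (by rwa [hlaw])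
  refine ⟨hint', ?_⟩
  have h1 : AEStronglyMeasurable g (Measure.map e P) := by
    rw [hlaw]; exact hg.aestronglyMeasurable
  have := integral_map he.aemeasurable h1
  rw [← this, hlaw, integral_smul_measure,
    integral_finset_sum_measure (fun j _ => srb_integrable_dirac hg (v j))]
  simp [integral_dirac, smul_eq_mul]

lemma srb_second_moment {Ω : Type*} [MeasurableSpace Ω] (P : Measure Ω)
    {N p : ℕ} (e : Ω → Fin N → ℝ) (s : ℝ)
    (hcov : ∀ i j : Fin N, Integrable (fun ω => e ω i * e ω j) P ∧
      ∫ ω, e ω i * e ω j ∂P = if i = j then s else 0)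
    (a : Fin p → Fin N → ℝ) :
    Integrable (fun ω => ∑ k, (∑ i, a k i * e ω i) ^ 2) P ∧
      ∫ ω, ∑ k, (∑ i, a k i * e ω i) ^ 2 ∂P = s * ∑ k, ∑ i, (a k i) ^ 2 := by
  have hrw : (fun ω => ∑ k, (∑ i, a k i * e ω i) ^ 2)
      = fun ω => ∑ k, ∑ i, ∑ j, (a k i * a k j) * (e ω i * e ω j) := by
    funext ω
    refine Finset.sum_congr rfl fun k _ => ?_
    rw [sq, Finset.sum_mul_sum]
    exact Finset.sum_congr rfl fun i _ => Finset.sum_congr rfl fun j _ => by ring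
  have hterm : ∀ (k : Fin p) (i j : Fin N),
      Integrable (fun ω => (a k i * a k j) * (e ω i * e ω j)) P :=
    fun k i j => ((hcov i j).1).const_mul _
  have hint : Integrable (fun ω => ∑ k, (∑ i, a k i * e ω i) ^ 2) P := by
    rw [hrw]
    exact integrable_finset_sum _ fun k _ => integrable_finset_sum _ fun i _ =>
      integrable_finset_sum _ fun j _ => hterm k i j
  refine ⟨hint, ?_⟩
  rw [hrw, integral_finset_sum _ fun k _ => integrable_finset_sum _ fun i _ =>
      integrable_finset_sum _ fun j _ => hterm k i j]
  have : ∀ k : Fin p, ∫ ω, ∑ i, ∑ j, (a k i * a k j) * (e ω i * e ω j) ∂P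
      = ∑ i, (a k i) ^ 2 * s := by
    intro k
    rw [integral_finset_sum _ fun i _ => integrable_finset_sum _ fun j _ => hterm k i j]
    refine Finset.sum_congr rfl fun i _ => ?_
    rw [integral_finset_sum _ fun j _ => hterm k i j]
    have : ∀ j : Fin N, ∫ ω, (a k i * a k j) * (e ω i * e ω j) ∂P
        = if i = j then (a k i)^2 * s else 0 := by
      intro j
      rw [integral_const_mul, (hcov i j).2]
      by_cases h : i = j
      · subst h; rw [if_pos rfl, if_pos rfl]; ring
      · simp [h]
    simp only [this, Finset.sum_ite_eq, Finset.mem_univ, if_true]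
  simp only [this, Finset.mul_sum]
  exact Finset.sum_congr rfl fun k _ => Finset.sum_congr rfl fun i _ => by ring

set_option maxHeartbeats 1000000 in
/-- conditional consistency of the SRB estimator in the linear model.
The `n`-th model has sample size `n+1`, subsample size `b n → ∞`, residuals summing to
zero, `(1/n) XᵀX → V` and `(1/n) XᵀJᵀJX → Q` positive definite, and `σ̂ₙ²/n → 0` with
`σ̂ₙ²` bounded.  Then for every `δ > 0`,
`P(‖βstar_n - βhat_n‖₂ > δ) → 0`. -/
theorem srb_consistency_linear
    {Ω : Type*} [MeasurableSpace Ω] (P : Measure Ω) [IsProbabilityMeasure P]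
    (p : ℕ) (b m : ℕ → ℕ) (hb : ∀ n, 0 < b n) (hbtop : Tendsto b atTop atTop)
    (hnb : ∀ n, n + 1 = m n * b n)
    (X : (n : ℕ) → Matrix (Fin (n + 1)) (Fin p) ℝ)
    (hX : ∀ n, IsUnit ((X n)ᵀ * X n).det)
    (J : (n : ℕ) → Matrix (Fin (b n)) (Fin (n + 1)) ℝ)
    (hJ : ∀ n (i : Fin (b n)) (j : Fin (n + 1)),
      J n i j = if (j : ℕ) % b n = (i : ℕ) then 1 else 0)
    (r : (n : ℕ) → Fin (n + 1) → ℝ) (hr : ∀ n, ∑ i, r n i = 0)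
    (V Q : Matrix (Fin p) (Fin p) ℝ) (hV : V.PosDef) (hQ : Q.PosDef)
    (hVlim : Tendsto (fun n : ℕ => (((n : ℝ) + 1))⁻¹ • ((X n)ᵀ * X n)) atTop (𝓝 V))
    (hQlim : Tendsto (fun n : ℕ => (((n : ℝ) + 1))⁻¹ • ((X n)ᵀ * (J n)ᵀ * J n * X n))
      atTop (𝓝 Q))
    (σsq : ℕ → ℝ) (hσsq : ∀ n, σsq n = (1 / ((n : ℝ) + 1)) * ∑ i, (r n i) ^ 2)
    (hσ0 : Tendsto (fun n : ℕ => σsq n / ((n : ℝ) + 1)) atTop (𝓝 0))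
    (hσbdd : ∃ C : ℝ, ∀ n, σsq n ≤ C)
    (ε : (n : ℕ) → Ω → Fin (b n) → ℝ)
    (hmeas : ∀ n (i : Fin (b n)), Measurable fun ω => ε n ω i)
    (hindep : ∀ n, iIndepFun
      (fun i ω => ε n ω i) P)
    (hlaw : ∀ n (i : Fin (b n)),
      Measure.map (fun ω => ε n ω i) P
        = ((n : ℝ≥0∞) + 1)⁻¹ • ∑ j : Fin (n + 1), Measure.dirac (r n j))
    (βhat : (n : ℕ) → Fin p → ℝ)
    (βstar : (n : ℕ) → Ω → Fin p → ℝ)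
    (hβstar : ∀ n ω, βstar n ω
        = βhat n + (((X n)ᵀ * X n)⁻¹ * (X n)ᵀ * (J n)ᵀ).mulVec (ε n ω)) :
    ∀ δ > (0 : ℝ),
      Tendsto (fun n =>
          (P {ω | Real.sqrt (∑ k, (βstar n ω k - βhat n k) ^ 2) > δ}).toReal)
        atTop (𝓝 0) := by
  intro δ hδ
  -- the bounding sequence
  set g : ℕ → ℝ := fun n => σsq n / ((n : ℝ) + 1) *
      Matrix.trace (((((n : ℝ) + 1))⁻¹ • ((X n)ᵀ * X n))⁻¹ *
        ((((n : ℝ) + 1))⁻¹ • ((X n)ᵀ * (J n)ᵀ * J n * X n)) *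
        ((((n : ℝ) + 1))⁻¹ • ((X n)ᵀ * X n))⁻¹) / δ ^ 2 with hg_def
  -- the bounding sequence tends to 0
  have hg0 : Tendsto g atTop (𝓝 0) := by
    have hVdet : V.det ≠ 0 := hV.det_pos.ne'
    have hRinv : ContinuousAt Ring.inverse (V.det) := by
      rw [Ring.inverse_eq_inv']
      exact continuousAt_inv₀ hVdet
    have hinv : Tendsto (fun n : ℕ => ((((n : ℝ) + 1))⁻¹ • ((X n)ᵀ * X n))⁻¹)
        atTop (𝓝 V⁻¹) := ((continuousAt_matrix_inv V hRinv).tendsto).comp hVlim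
    have htr : Tendsto (fun n : ℕ =>
        Matrix.trace (((((n : ℝ) + 1))⁻¹ • ((X n)ᵀ * X n))⁻¹ *
          ((((n : ℝ) + 1))⁻¹ • ((X n)ᵀ * (J n)ᵀ * J n * X n)) *
          ((((n : ℝ) + 1))⁻¹ • ((X n)ᵀ * X n))⁻¹)) atTop
        (𝓝 (Matrix.trace (V⁻¹ * Q * V⁻¹))) := by
      have h1 := (hinv.mul hQlim).mul hinv
      exact ((Continuous.matrix_trace (continuous_id)).tendsto _).comp h1
    have := (hσ0.mul htr).div_const (δ ^ 2)
    simpa [hg_def] using this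
  -- the pointwise bound
  have key : ∀ n, (P {ω | Real.sqrt (∑ k, (βstar n ω k - βhat n k) ^ 2) > δ}).toReal ≤ g n := by
    intro n
    have hc0 : ((n : ℝ) + 1) ≠ 0 := by positivity
    have hcE : ((n : ℝ≥0∞) + 1)⁻¹ ≠ ⊤ := by simp
    have hcto : (((n : ℝ≥0∞) + 1)⁻¹).toReal = ((n : ℝ) + 1)⁻¹ := by
      rw [ENNReal.toReal_inv, ENNReal.toReal_add (by simp) (by simp)]
      simp
    -- first and second moments
    have hm0 : ∀ i, Integrable (fun ω => ε n ω i) P ∧ ∫ ω, ε n ω i ∂P = 0 := by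
      intro i
      have h := srb_moment_of_law (hmeas n i) hcE (hlaw n i) id measurable_id
      simp only [id_eq] at h
      exact ⟨h.1, by rw [h.2]; simp [hr n]⟩
    have hm2 : ∀ i, ∫ ω, (ε n ω i) ^ 2 ∂P = σsq n ∧
        Integrable (fun ω => (ε n ω i) ^ 2) P := by
      intro i
      have h := srb_moment_of_law (hmeas n i) hcE (hlaw n i) (fun x => x ^ 2)
        (measurable_id.pow_const 2)
      refine ⟨?_, h.1⟩
      rw [h.2, hcto, hσsq n, one_div]
    have hcov : ∀ i j : Fin (b n), Integrable (fun ω => ε n ω i * ε n ω j) P ∧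
        ∫ ω, ε n ω i * ε n ω j ∂P = if i = j then σsq n else 0 := by
      intro i j
      by_cases h : i = j
      · subst h
        have h2 := hm2 i
        constructor
        · have := h2.2
          simpa [sq] using this
        · rw [if_pos rfl, ← h2.1]
          congr 1
          funext ω
          ring
      · have hind : IndepFun (fun ω => ε n ω i) (fun ω => ε n ω j) P :=
          (hindep n).indepFun h
        have hintm : Integrable (fun ω => ε n ω i * ε n ω j) P :=
          hind.integrable_mul (hm0 i).1 (hm0 j).1
        refine ⟨hintm, ?_⟩
        rw [if_neg h]
        have := hind.integral_mul_eq_mul_integral (hm0 i).1.aestronglyMeasurable (hm0 j).1.aestronglyMeasurable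
        simpa [Pi.mul_apply, (hm0 i).2, (hm0 j).2] using this
    -- second moment of the linear combination
    set a : Fin p → Fin (b n) → ℝ :=
      fun k i => (((X n)ᵀ * X n)⁻¹ * (X n)ᵀ * (J n)ᵀ) k i with ha_def
    have hsm := srb_second_moment P (ε n) (σsq n) hcov a
    set f : Ω → ℝ := fun ω => ∑ k, (∑ i, a k i * ε n ω i) ^ 2 with hf_def
    have hnonneg : ∀ ω, 0 ≤ f ω := fun ω => Finset.sum_nonneg fun k _ => sq_nonneg _
    -- identify the set
    have hsetall : ∀ ω, ∑ k, (βstar n ω k - βhat n k) ^ 2 = f ω := by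
      intro ω
      refine Finset.sum_congr rfl fun k _ => ?_
      rw [hβstar n ω]
      simp [Matrix.mulVec, dotProduct, ha_def]
    have hseteq : {ω | Real.sqrt (∑ k, (βstar n ω k - βhat n k) ^ 2) > δ}
        = {ω | Real.sqrt (f ω) > δ} := by
      ext ω; rw [Set.mem_setOf_eq, Set.mem_setOf_eq, hsetall ω]
    -- Markov inequality
    have hmark := mul_meas_ge_le_integral_of_nonneg (μ := P) (ae_of_all _ hnonneg) hsm.1 (δ ^ 2)
    have hsub : {ω | Real.sqrt (f ω) > δ} ⊆ {ω | δ ^ 2 ≤ f ω} := by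
      intro ω hω
      have h1 : δ < Real.sqrt (f ω) := hω
      have h2 : δ ^ 2 < Real.sqrt (f ω) ^ 2 := by
        apply pow_lt_pow_left₀ h1 hδ.le
        norm_num
      rw [Real.sq_sqrt (hnonneg ω)] at h2
      exact h2.le
    have h3 : (P {ω | Real.sqrt (f ω) > δ}).toReal ≤ (∫ ω, f ω ∂P) / δ ^ 2 := by
      have hPle : (P {ω | Real.sqrt (f ω) > δ}).toReal ≤ (P {ω | δ ^ 2 ≤ f ω}).toReal :=
        ENNReal.toReal_mono (measure_ne_top P _) (measure_mono hsub)
      have h4 : (P {ω | δ ^ 2 ≤ f ω}).toReal ≤ (∫ ω, f ω ∂P) / δ ^ 2 := by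
        rw [le_div_iff₀ (by positivity)]
        calc (P {ω | δ ^ 2 ≤ f ω}).toReal * δ ^ 2
            = δ ^ 2 * (P {ω | δ ^ 2 ≤ f ω}).toReal := mul_comm _ _
          _ ≤ ∫ ω, f ω ∂P := hmark
      linarith
    -- matrix algebra: ∫ f = σsq n / (n+1) * trace(...)
    have hintf : ∫ ω, f ω ∂P = σsq n * ∑ k, ∑ i, (a k i) ^ 2 := hsm.2
    have hMC : ∑ k, ∑ i, (a k i) ^ 2 = ((n : ℝ) + 1)⁻¹ *
        Matrix.trace (((((n : ℝ) + 1))⁻¹ • ((X n)ᵀ * X n))⁻¹ *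
          ((((n : ℝ) + 1))⁻¹ • ((X n)ᵀ * (J n)ᵀ * J n * X n)) *
          ((((n : ℝ) + 1))⁻¹ • ((X n)ᵀ * X n))⁻¹) := by
      set M : Matrix (Fin p) (Fin p) ℝ := (X n)ᵀ * X n with hM_def
      set A : Matrix (Fin p) (Fin (b n)) ℝ := M⁻¹ * (X n)ᵀ * (J n)ᵀ with hA_def
      have hMT : Mᵀ = M := by
        rw [hM_def, Matrix.transpose_mul, Matrix.transpose_transpose]
      have hMinvT : (M⁻¹)ᵀ = M⁻¹ := by
        rw [Matrix.transpose_nonsing_inv, hMT]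
      have hS : ∑ k, ∑ i, (a k i) ^ 2 = Matrix.trace (A * Aᵀ) := by
        simp only [Matrix.trace, Matrix.diag_apply, Matrix.mul_apply,
          Matrix.transpose_apply, sq, ha_def, hA_def]
      have hAA : A * Aᵀ = M⁻¹ * ((X n)ᵀ * (J n)ᵀ * J n * X n) * M⁻¹ := by
        rw [hA_def]
        simp only [Matrix.transpose_mul, Matrix.transpose_transpose, hMinvT,
          Matrix.mul_assoc]
      have hBinv : ((((n : ℝ) + 1))⁻¹ • M)⁻¹ = ((n : ℝ) + 1) • M⁻¹ := by
        refine Matrix.inv_eq_right_inv ?_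
        rw [Matrix.smul_mul, Matrix.mul_smul, smul_smul, inv_mul_cancel₀ hc0,
          one_smul, Matrix.mul_nonsing_inv _ (hX n)]
      rw [hS, hAA, hBinv]
      simp only [Matrix.smul_mul, Matrix.mul_smul, smul_smul, Matrix.trace_smul,
        smul_eq_mul]
      try field_simp
      try ring
    rw [hseteq] at *
    calc (P {ω | Real.sqrt (f ω) > δ}).toReal ≤ (∫ ω, f ω ∂P) / δ ^ 2 := h3
      _ = g n := by
          rw [hintf, hMC, hg_def]
          try field_simp
          try ring
  exact squeeze_zero (fun n => ENNReal.toReal_nonneg) key hg0
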